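/- Let σ be an invertible n×n density matrix that is not a scalar multiple of the identity, and let s ∈ [0,1]. The cone of positive semidefinite Hermitian matrices is self-dual with respect to the inner product ⟨A,B⟩_s = Tr(A* σ^s B σ^{1-s}) if and only if s = 1/2. -/

import Mathlib

open Matrix
open scoped ComplexOrder

namespace StmtAux

variable {n : ℕ}

private lemma outer_herm (v : Fin n → ℂ) :
    (vecMulVec v (star v)).IsHermitian := by
  ext i j
  simp [Matrix.IsHermitian, conjTranspose_apply, vecMulVec_apply, mul_comm]

private lemma outer_mulVec (a u : Fin n → ℂ) :
    vecMulVec a (star a) *ᵥ u = (star a ⬝ᵥ u) • a := by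
  ext k
  simp only [mulVec, dotProduct, vecMulVec_apply, Pi.smul_apply, smul_eq_mul, Pi.star_apply]
  rw [Finset.sum_mul]
  exact Finset.sum_congr rfl fun j _ => by ring

private lemma posSemidef_outer (v : Fin n → ℂ) :
    (vecMulVec v (star v)).PosSemidef := by
  refine posSemidef_iff_dotProduct_mulVec.mpr ⟨outer_herm v, fun x => ?_⟩
  rw [outer_mulVec, dotProduct_smul]
  have h : star x ⬝ᵥ v = star (star v ⬝ᵥ x) := by
    simp only [dotProduct, star_sum, star_mul', star_star, Pi.star_apply]
    exact Finset.sum_congr rfl fun j _ => by ring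
  rw [smul_eq_mul, h]
  exact mul_star_self_nonneg _

private lemma trace_outer_mul (x : Fin n → ℂ) (M : Matrix (Fin n) (Fin n) ℂ) :
    (vecMulVec x (star x) * M).trace = star x ⬝ᵥ (M *ᵥ x) := by
  simp only [Matrix.trace, Matrix.diag, mul_apply, vecMulVec_apply, dotProduct, mulVec,
    Pi.star_apply, Finset.mul_sum]
  rw [Finset.sum_comm]
  exact Finset.sum_congr rfl fun q _ => Finset.sum_congr rfl fun p _ => by ring

private lemma trace_four (x a : Fin n → ℂ) (P Q : Matrix (Fin n) (Fin n) ℂ) :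
    (vecMulVec x (star x) * P * vecMulVec a (star a) * Q).trace
      = (star x ⬝ᵥ (P *ᵥ a)) * (star a ⬝ᵥ (Q *ᵥ x)) := by
  rw [mul_assoc, mul_assoc, trace_outer_mul]
  rw [← Matrix.mulVec_mulVec, ← Matrix.mulVec_mulVec, outer_mulVec, Matrix.mulVec_smul,
    dotProduct_smul, smul_eq_mul, mul_comm]


private lemma psd_trace_nonneg {M : Matrix (Fin n) (Fin n) ℂ} (hM : M.PosSemidef) :
    0 ≤ M.trace := by
  rw [Matrix.trace]
  refine Finset.sum_nonneg fun i _ => ?_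
  have h := hM.dotProduct_mulVec_nonneg (Pi.single i 1)
  have he : star (Pi.single i (1:ℂ)) ⬝ᵥ (M *ᵥ Pi.single i 1) = M.diag i := by
    simp [dotProduct, Pi.single_apply, apply_ite]
  rwa [he] at h

private lemma trace_mul_psd_nonneg {M A : Matrix (Fin n) (Fin n) ℂ}
    (hM : M.PosSemidef) (hA : A.PosSemidef) : 0 ≤ (M * A).trace := by
  obtain ⟨B, rfl⟩ : ∃ B : Matrix (Fin n) (Fin n) ℂ, A = Bᴴ * B := by
    open scoped MatrixOrder in exact CStarAlgebra.nonneg_iff_eq_star_mul_self.mp hA.nonneg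
  rw [← mul_assoc, Matrix.trace_mul_comm, ← mul_assoc]
  exact psd_trace_nonneg (hM.mul_mul_conjTranspose_same B)

private lemma posDef_conj {U : Matrix (Fin n) (Fin n) ℂ}
    (hU : U * star U = 1) (hU' : star U * U = 1) {d : Fin n → ℝ} (hd : ∀ i, 0 < d i) :
    (U * diagonal (fun i => (d i : ℂ)) * star U).PosDef := by
  have hD : (diagonal (fun i => ((d i : ℝ) : ℂ))).PosDef :=
    Matrix.posDef_diagonal_iff.mpr fun i => by
      exact Complex.zero_lt_real.mpr (hd i)
  rw [posDef_iff_dotProduct_mulVec]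
  constructor
  · show _ᴴ = _
    rw [star_eq_conjTranspose, conjTranspose_mul, conjTranspose_mul,
      conjTranspose_conjTranspose, hD.1.eq, mul_assoc]
  · intro v hv
    have h1 : star U *ᵥ v ≠ 0 := by
      intro h
      apply hv
      have h2 := congrArg (fun w => U *ᵥ w) h
      simpa [Matrix.mulVec_mulVec, hU] using h2
    have h2 := (posDef_iff_dotProduct_mulVec.mp hD).2 h1
    have h3 : star (star U *ᵥ v) ⬝ᵥ (diagonal (fun i => ((d i : ℝ) : ℂ)) *ᵥ (star U *ᵥ v))
        = star v ⬝ᵥ ((U * diagonal (fun i => ((d i : ℝ) : ℂ)) * star U) *ᵥ v) := by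
      rw [star_mulVec, ← star_eq_conjTranspose, star_star, Matrix.mulVec_mulVec,
        ← dotProduct_mulVec, Matrix.mulVec_mulVec, ← mul_assoc]
    rw [← h3]
    exact h2

private lemma rpow_eq_of {p q s : ℝ} (hp : 0 < p) (hq : 0 < q) (hs : s ≠ 1/2)
    (h : q ^ s * p ^ (1 - s) = p ^ s * q ^ (1 - s)) : p = q := by
  have hps : (0:ℝ) < p ^ s := Real.rpow_pos_of_pos hp s
  have hqs : (0:ℝ) < q ^ s := Real.rpow_pos_of_pos hq s
  have h2 : p ^ (1 - s) / p ^ s = q ^ (1 - s) / q ^ s := by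
    rw [div_eq_div_iff hps.ne' hqs.ne']
    linear_combination h
  rw [← Real.rpow_sub hp, ← Real.rpow_sub hq] at h2
  have hss : 1 - s - s = 1 - 2*s := by ring
  rw [hss] at h2
  have h1s : (1 : ℝ) - 2*s ≠ 0 := fun hc => hs (by linarith)
  have h4 := congrArg (fun y : ℝ => y ^ ((1 - 2*s)⁻¹ : ℝ)) h2
  rwa [← Real.rpow_mul hp.le, ← Real.rpow_mul hq.le, mul_inv_cancel₀ h1s,
    Real.rpow_one, Real.rpow_one] at h4

end StmtAux


/-- Let `σ` be an invertible density matrix that is not a multiple of the identity, and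
`s ∈ [0,1]`.  The cone of PSD Hermitian matrices is self-dual with respect to the inner
product `⟨A,B⟩_s = Tr(A* σ^s B σ^{1-s})` if and only if `s = 1/2`. -/
theorem stmt_3 (n : ℕ) (σ : Matrix (Fin n) (Fin n) ℂ)
    (hσ : σ.PosDef) (htr : σ.trace = 1) (hns : ∀ c : ℂ, σ ≠ c • (1 : Matrix (Fin n) (Fin n) ℂ))
    (s : ℝ) (hs : s ∈ Set.Icc (0:ℝ) 1) :
    (∀ X : Matrix (Fin n) (Fin n) ℂ, X.IsHermitian →
        ((∀ A : Matrix (Fin n) (Fin n) ℂ, A.PosSemidef →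
            0 ≤ (Xᴴ * cfc (fun x : ℝ => x ^ s) σ * A * cfc (fun x : ℝ => x ^ (1 - s)) σ).trace)
          ↔ X.PosSemidef))
      ↔ s = 1 / 2 := by
  obtain ⟨hs0, hs1⟩ := hs
  have hH : σ.IsHermitian := hσ.1
  set U : Matrix (Fin n) (Fin n) ℂ := (hH.eigenvectorUnitary : Matrix (Fin n) (Fin n) ℂ)
    with hUdef
  have hUU : U * star U = 1 := Matrix.mem_unitaryGroup_iff.mp (hH.eigenvectorUnitary).2
  have hUU' : star U * U = 1 := Matrix.mem_unitaryGroup_iff'.mp (hH.eigenvectorUnitary).2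
  have hev : ∀ i, 0 < hH.eigenvalues i := fun i => hσ.eigenvalues_pos i
  have hcfc : ∀ t : ℝ, cfc (fun x : ℝ => x ^ t) σ
      = U * diagonal (fun i => ((hH.eigenvalues i ^ t : ℝ) : ℂ)) * star U := by
    intro t
    rw [hH.cfc_eq]
    rfl
  have key : ∀ (D : Fin n → ℂ) (w z : Fin n → ℂ),
      star (U *ᵥ w) ⬝ᵥ ((U * diagonal D * star U) *ᵥ (U *ᵥ z))
        = ∑ k, star (w k) * D k * z k := by
    intro D w z
    rw [Matrix.mulVec_mulVec, mul_assoc (U * diagonal D), hUU', mul_one, star_mulVec,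
      dotProduct_mulVec, Matrix.vecMul_vecMul, ← star_eq_conjTranspose, ← mul_assoc, hUU',
      one_mul]
    simp [dotProduct, vecMul_diagonal, mul_assoc]
  constructor
  · -- forward: self-duality implies s = 1/2
    intro hsd
    by_contra hne
    obtain ⟨i, j, hij⟩ : ∃ i j, hH.eigenvalues i ≠ hH.eigenvalues j := by
      by_contra hcon
      push_neg at hcon
      rcases Nat.eq_zero_or_pos n with hn | hn
      · subst hn
        simp [Matrix.trace] at htr
      · set i0 : Fin n := ⟨0, hn⟩
        apply hns ((hH.eigenvalues i0 : ℝ) : ℂ)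
        have hfun : (RCLike.ofReal ∘ hH.eigenvalues : Fin n → ℂ)
            = fun _ => ((hH.eigenvalues i0 : ℝ) : ℂ) :=
          funext fun k => by simp [Function.comp, hcon k i0]
        calc σ = U * diagonal (RCLike.ofReal ∘ hH.eigenvalues) * star U := hH.spectral_theorem
          _ = U * (((hH.eigenvalues i0 : ℝ) : ℂ) • 1) * star U := by
              rw [hfun, Matrix.smul_one_eq_diagonal]
          _ = ((hH.eigenvalues i0 : ℝ) : ℂ) • 1 := by
              rw [Matrix.mul_smul, Matrix.smul_mul, mul_one, hUU]
    have hij' : i ≠ j := fun h => hij (h ▸ rfl)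
    set w : Fin n → ℂ := Pi.single i 1 + Pi.single j 1 with hw
    set z : Fin n → ℂ := Pi.single i 1 + Pi.single j Complex.I with hz
    set x : Fin n → ℂ := U *ᵥ w with hx
    set a : Fin n → ℂ := U *ᵥ z with ha
    have hXpsd := StmtAux.posSemidef_outer x
    have h0 := (hsd _ hXpsd.1).mpr hXpsd (vecMulVec a (star a)) (StmtAux.posSemidef_outer a)
    rw [hXpsd.1.eq, hcfc s, hcfc (1-s), StmtAux.trace_four, hx, ha, key, key] at h0
    have e1 : (∑ k, star (w k) * ((hH.eigenvalues k ^ s : ℝ) : ℂ) * z k)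
        = ((hH.eigenvalues i ^ s : ℝ) : ℂ)
          + ((hH.eigenvalues j ^ s : ℝ) : ℂ) * Complex.I := by
      rw [← Finset.sum_subset (Finset.subset_univ ({i, j} : Finset (Fin n)))
        (fun k _ hk => ?_), Finset.sum_pair hij']
      · simp [hw, hz, Pi.single_apply, hij', hij'.symm]
      · have h1 : k ≠ i ∧ k ≠ j := by simpa [Finset.mem_insert] using hk
        simp [hw, hz, Pi.single_apply, h1.1, h1.2]
    have e2 : (∑ k, star (z k) * ((hH.eigenvalues k ^ (1-s) : ℝ) : ℂ) * w k)
        = ((hH.eigenvalues i ^ (1-s) : ℝ) : ℂ)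
          - ((hH.eigenvalues j ^ (1-s) : ℝ) : ℂ) * Complex.I := by
      rw [← Finset.sum_subset (Finset.subset_univ ({i, j} : Finset (Fin n)))
        (fun k _ hk => ?_), Finset.sum_pair hij']
      · simp [hw, hz, Pi.single_apply, hij', hij'.symm, Complex.star_def, Complex.conj_I]
        ring
      · have h1 : k ≠ i ∧ k ≠ j := by simpa [Finset.mem_insert] using hk
        simp [hw, hz, Pi.single_apply, h1.1, h1.2]
    rw [e1, e2] at h0
    have him := (Complex.nonneg_iff.mp h0).2
    have hre : hH.eigenvalues j ^ s * hH.eigenvalues i ^ (1-s)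
        = hH.eigenvalues i ^ s * hH.eigenvalues j ^ (1-s) := by
      have := him.symm
      simp only [Complex.mul_im, Complex.sub_im, Complex.add_im, Complex.add_re,
        Complex.ofReal_re, Complex.ofReal_im, Complex.mul_re, Complex.I_re, Complex.I_im,
        Complex.sub_re] at this
      linarith
    exact hij (StmtAux.rpow_eq_of (hev i) (hev j) hne hre)
  · -- backward: s = 1/2 implies self-duality
    intro hs12
    subst hs12
    have hfeq : (fun x : ℝ => x ^ ((1:ℝ) - 1 / 2)) = (fun x : ℝ => x ^ ((1:ℝ) / 2)) := by
      norm_num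
    rw [hfeq]
    set d : Fin n → ℝ := fun i => hH.eigenvalues i ^ ((1:ℝ)/2) with hd
    have hdpos : ∀ i, 0 < d i := fun i => Real.rpow_pos_of_pos (hev i) _
    set P : Matrix (Fin n) (Fin n) ℂ := U * diagonal (fun i => ((d i : ℝ) : ℂ)) * star U with hP
    have hPeq : cfc (fun x : ℝ => x ^ ((1:ℝ)/2)) σ = P := hcfc _
    have hPD : P.PosDef := StmtAux.posDef_conj hUU hUU' hdpos
    have hPH : Pᴴ = P := hPD.1
    have hdet : IsUnit P.det := hPD.det_pos.ne'.isUnit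
    intro X hX
    rw [hX.eq, hPeq]
    constructor
    · intro h
      refine posSemidef_iff_dotProduct_mulVec.mpr ⟨hX, fun v => ?_⟩
      set u : Fin n → ℂ := P⁻¹ *ᵥ v with hu
      have hPu : P *ᵥ u = v := by
        rw [hu, Matrix.mulVec_mulVec, Matrix.mul_nonsing_inv _ hdet, Matrix.one_mulVec]
      have h2 := h (vecMulVec u (star u)) (StmtAux.posSemidef_outer u)
      have h4 : star u ᵥ* P = star v := by
        conv_lhs => rw [← hPH]
        rw [← star_mulVec, hPu]
      have h3 : (X * P * vecMulVec u (star u) * P).trace = star v ⬝ᵥ (X *ᵥ v) := by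
        rw [Matrix.trace_mul_comm]
        have hassoc : P * (X * P * vecMulVec u (star u))
            = (P * X * P) * vecMulVec u (star u) := by
          simp only [← mul_assoc]
        rw [hassoc, Matrix.trace_mul_comm, StmtAux.trace_outer_mul,
          ← Matrix.mulVec_mulVec, ← Matrix.mulVec_mulVec, hPu, dotProduct_mulVec, h4]
      rw [h3] at h2
      exact h2
    · intro hXP A hA
      have heq : (X * P * A * P).trace = ((P * X * P) * A).trace := by
        rw [Matrix.trace_mul_comm]
        congr 1
        simp only [← mul_assoc]
      rw [heq]
      have hPXP : (P * X * P).PosSemidef := by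
        have h5 := hXP.mul_mul_conjTranspose_same P
        rwa [hPH] at h5
      exact StmtAux.trace_mul_psd_nonneg hPXP hA
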